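/- arXiv:1804.01213 — 2 statements merged into one kernel-verified Lean document; each statement's English description precedes it below -/
import Mathlib

section
/- There exist transcendental entire functions f and g generating a non-trivial transcendental semigroup S = ⟨f, g⟩, and a simply connected domain D, such that D ⊆ F(S) and, for every h ∈ S, D lies in a pre-periodic component of F(h). -/
open Complex Filter Topology

/-- A transcendental entire function: complex-differentiable on all of `ℂ` and
not equal to (the evaluation of) any polynomial. -/
def TranscendentalEntire (f : ℂ → ℂ) : Prop :=
  Differentiable ℂ f ∧ ¬ ∃ p : Polynomial ℂ, ∀ z : ℂ, f z = p.eval z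

/-- A family `𝔉` of functions is normal on a set `U ⊆ ℂ`: every sequence of members of `𝔉`
has a subsequence that either converges locally uniformly on `U` to a limit function, or
diverges to `∞` uniformly on every compact subset of `U`. -/
def NormalOn (𝔉 : Set (ℂ → ℂ)) (U : Set ℂ) : Prop :=
  ∀ s : ℕ → ℂ → ℂ, (∀ n, s n ∈ 𝔉) →
    ∃ φ : ℕ → ℕ, StrictMono φ ∧
      ((∃ g : ℂ → ℂ, TendstoLocallyUniformlyOn (fun n => s (φ n)) g atTop U) ∨
       (∀ K : Set ℂ, K ⊆ U → IsCompact K →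
          ∀ M : ℝ, ∀ᶠ n in atTop, ∀ z ∈ K, M ≤ ‖s (φ n) z‖))

/-- The Fatou set of a family of functions: points having an open neighborhood on which
the family is normal. -/
def fatouSetOfFamily (𝔉 : Set (ℂ → ℂ)) : Set ℂ :=
  {z | ∃ U : Set ℂ, IsOpen U ∧ z ∈ U ∧ NormalOn 𝔉 U}

/-- The family of (positive) iterates of a function. -/
def iteratesOf (f : ℂ → ℂ) : Set (ℂ → ℂ) := {g | ∃ n : ℕ, 0 < n ∧ g = f^[n]}

/-- The Fatou set of a single function `f`: points near which the family of iterates of `f`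
is normal. -/
def fatouSet (f : ℂ → ℂ) : Set ℂ := fatouSetOfFamily (iteratesOf f)

/-- `U` is a Fatou component of `f`: a connected component of the Fatou set of `f`. -/
def IsFatouComponent (f : ℂ → ℂ) (U : Set ℂ) : Prop :=
  ∃ z ∈ fatouSet f, U = connectedComponentIn (fatouSet f) z

/-- `U` is a periodic Fatou component of `f`: some iterate maps `U` back into `U`
(i.e. `Uₙ = U` for some `n ≥ 1`). -/
def IsPeriodicComponent (f : ℂ → ℂ) (U : Set ℂ) : Prop :=
  IsFatouComponent f U ∧ ∃ n : ℕ, 0 < n ∧ f^[n] '' U ⊆ U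

/-- `U` is a pre-periodic Fatou component of `f`: `Uₙ = Uₘ` for some `n > m ≥ 0`,
i.e. `fⁿ(U)` and `fᵐ(U)` lie in the same Fatou component. -/
def IsPreperiodicComponent (f : ℂ → ℂ) (U : Set ℂ) : Prop :=
  IsFatouComponent f U ∧ ∃ n m : ℕ, m < n ∧ ∀ z ∈ U,
    connectedComponentIn (fatouSet f) (f^[n] z) = connectedComponentIn (fatouSet f) (f^[m] z)

/-- `U` is a wandering Fatou component of `f`: a Fatou component that is not pre-periodic. -/
def IsWanderingComponent (f : ℂ → ℂ) (U : Set ℂ) : Prop :=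
  IsFatouComponent f U ∧ ¬ ∃ n m : ℕ, m < n ∧ ∀ z ∈ U,
    connectedComponentIn (fatouSet f) (f^[n] z) = connectedComponentIn (fatouSet f) (f^[m] z)

/-- A (plane) domain: a nonempty open connected subset of `ℂ`. -/
def IsPlaneDomain (D : Set ℂ) : Prop := IsOpen D ∧ IsConnected D

/-- `D` lies in a wandering component of the Fatou set of `f`. -/
def LiesInWanderingComponent (f : ℂ → ℂ) (D : Set ℂ) : Prop :=
  ∃ U : Set ℂ, IsWanderingComponent f U ∧ D ⊆ U

/-- `D` lies in a pre-periodic component of the Fatou set of `f`. -/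
def LiesInPreperiodicComponent (f : ℂ → ℂ) (D : Set ℂ) : Prop :=
  ∃ U : Set ℂ, IsPreperiodicComponent f U ∧ D ⊆ U

/-- `D` lies in a periodic component of the Fatou set of `f`. -/
def LiesInPeriodicComponent (f : ℂ → ℂ) (D : Set ℂ) : Prop :=
  ∃ U : Set ℂ, IsPeriodicComponent f U ∧ D ⊆ U

/-- Membership in the semigroup (under composition) generated by a set `A` of functions. -/
inductive InSemigroup (A : Set (ℂ → ℂ)) : (ℂ → ℂ) → Prop
  | base : ∀ {f}, f ∈ A → InSemigroup A f
  | comp : ∀ {f g}, InSemigroup A f → InSemigroup A g → InSemigroup A (f ∘ g)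

/-- The semigroup generated by a set of functions. -/
def semigroupGen (A : Set (ℂ → ℂ)) : Set (ℂ → ℂ) := {h | InSemigroup A h}

/-- A semigroup of functions is trivial (cyclic) if it is of the form `{φⁿ : n ≥ 1}`
for a single function `φ`. -/
def IsTrivialSemigroup (S : Set (ℂ → ℂ)) : Prop :=
  ∃ φ : ℂ → ℂ, S = iteratesOf φ



/- ### Auxiliary development -/

noncomputable section
namespace P1

/-- generator 1 -/
def F1 : ℂ → ℂ := fun z => z + 1 + Complex.exp (-z)
/-- generator 2 -/
def F2 : ℂ → ℂ := fun z => z + 2 + Complex.exp (-z)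
/-- right half plane -/
def Hp : Set ℂ := {z : ℂ | 1 < z.re}
/-- the generating set -/
def A : Set (ℂ → ℂ) := {F1, F2}

lemma isOpen_Hp : IsOpen Hp := isOpen_lt continuous_const Complex.continuous_re

lemma convex_Hp : Convex ℝ Hp := convex_halfSpace_re_gt 1

lemma exp_neg_re_bound (z : ℂ) (hz : 1 ≤ z.re) : |(Complex.exp (-z)).re| ≤ 1/2 := by
  have h1 : |(Complex.exp (-z)).re| ≤ ‖Complex.exp (-z)‖ := Complex.abs_re_le_norm _
  have h2 : ‖Complex.exp (-z)‖ = Real.exp (-z.re) := by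
    rw [Complex.norm_exp]; simp
  have h3 : Real.exp (-z.re) ≤ Real.exp (-1) := Real.exp_le_exp.mpr (by linarith)
  have h4 : Real.exp (-1) ≤ 1/2 := by
    rw [Real.exp_neg]
    have h5 : (2:ℝ) ≤ Real.exp 1 := by
      have := Real.add_one_le_exp (1:ℝ); linarith
    rw [show (1:ℝ)/2 = 2⁻¹ by norm_num]
    exact inv_anti₀ (by norm_num) h5
  linarith

lemma F1_re (z : ℂ) : (F1 z).re = z.re + 1 + (Complex.exp (-z)).re := by simp [F1]

lemma F2_re (z : ℂ) : (F2 z).re = z.re + 2 + (Complex.exp (-z)).re := by simp [F2]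

lemma step_bound {h : ℂ → ℂ} (hh : h = F1 ∨ h = F2) (z : ℂ) (hz : 1 ≤ z.re) :
    z.re + 1/2 ≤ (h z).re ∧ (h z).re ≤ z.re + 3 := by
  have hb1 := abs_le.mp (exp_neg_re_bound z hz)
  rcases hh with rfl | rfl
  · rw [F1_re]; constructor <;> linarith
  · rw [F2_re]; constructor <;> linarith

lemma mem_A {h : ℂ → ℂ} (hh : h ∈ A) : h = F1 ∨ h = F2 := by
  rcases hh with h1 | h2
  · exact Or.inl h1
  · exact Or.inr h2

/-- every semigroup element pushes the real part up by at least 1/2 on Hp -/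
lemma sem_bound {h : ℂ → ℂ} (hh : InSemigroup A h) :
    ∀ z : ℂ, 1 ≤ z.re → z.re + 1/2 ≤ (h z).re := by
  induction hh with
  | base hmem => intro z hz; exact (step_bound (mem_A hmem) z hz).1
  | comp h1 h2 ih1 ih2 =>
      intro z hz
      have hb2 := ih2 z hz
      have hb1 := ih1 _ (by linarith : (1:ℝ) ≤ _)
      simp only [Function.comp_apply]
      linarith

lemma sem_diff {h : ℂ → ℂ} (hh : InSemigroup A h) : Differentiable ℂ h := by
  have hF1 : Differentiable ℂ F1 := by
    apply Differentiable.add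
    · exact (differentiable_id).add (differentiable_const _)
    · exact Complex.differentiable_exp.comp differentiable_neg
  have hF2 : Differentiable ℂ F2 := by
    apply Differentiable.add
    · exact (differentiable_id).add (differentiable_const _)
    · exact Complex.differentiable_exp.comp differentiable_neg
  induction hh with
  | base hmem => rcases mem_A hmem with rfl | rfl <;> assumption
  | comp h1 h2 ih1 ih2 => exact ih1.comp ih2

lemma sem_nonconst {h : ℂ → ℂ} (hh : InSemigroup A h) : ¬ ∃ w : ℂ, ∀ z, h z = w := by
  rintro ⟨w, hw⟩
  set x : ℝ := max 1 w.re + 1 with hx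
  have hx1 : (1:ℝ) ≤ (x:ℂ).re := by
    rw [Complex.ofReal_re]; have := le_max_left 1 w.re; linarith
  have := sem_bound hh x hx1
  rw [hw x] at this
  rw [Complex.ofReal_re] at this
  have := le_max_right 1 w.re
  simp only [hx] at *
  linarith

/-- words in the generators -/
def word : List Bool → ℂ → ℂ
  | [] => id
  | b :: l => (if b then F1 else F2) ∘ word l

lemma word_append (l1 l2 : List Bool) : word (l1 ++ l2) = word l1 ∘ word l2 := by
  induction l1 with
  | nil => simp [word]
  | cons b l ih => simp [word, ih, Function.comp_assoc]

lemma mem_word {h : ℂ → ℂ} (hh : InSemigroup A h) :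
    ∃ l : List Bool, l ≠ [] ∧ h = word l := by
  induction hh with
  | base hmem =>
      rcases mem_A hmem with rfl | rfl
      · exact ⟨[true], by simp, by simp [word]⟩
      · exact ⟨[false], by simp, by simp [word]⟩
  | comp h1 h2 ih1 ih2 =>
      obtain ⟨l1, hl1, rfl⟩ := ih1
      obtain ⟨l2, hl2, rfl⟩ := ih2
      exact ⟨l1 ++ l2, by simp [hl1], (word_append l1 l2).symm⟩

lemma word_bound (l : List Bool) : ∀ z : ℂ, 1 ≤ z.re →
    z.re + l.length * (1/2) ≤ (word l z).re ∧ (word l z).re ≤ z.re + 3 * l.length := by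
  induction l with
  | nil => intro z hz; simp [word]
  | cons b l ih =>
      intro z hz
      obtain ⟨ih1, ih2⟩ := ih z hz
      have hlen : (0:ℝ) ≤ l.length := Nat.cast_nonneg _
      have hw1 : (1:ℝ) ≤ (word l z).re := by linarith
      have hs := step_bound (h := if b then F1 else F2) (by cases b <;> simp) (word l z) hw1
      have : word (b :: l) z = (if b then F1 else F2) (word l z) := rfl
      rw [this]
      simp only [List.length_cons]
      push_cast
      constructor <;> linarith [hs.1, hs.2]

lemma finite_small (B : ℝ) : {h : ℂ → ℂ | InSemigroup A h ∧ (h 2).re ≤ B}.Finite := by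
  have hsub : {h : ℂ → ℂ | InSemigroup A h ∧ (h 2).re ≤ B} ⊆
      word '' {l : List Bool | l.length ≤ Nat.ceil (2*B)} := by
    rintro h ⟨hh, hB⟩
    obtain ⟨l, -, rfl⟩ := mem_word hh
    refine ⟨l, ?_, rfl⟩
    have h2re : ((2:ℂ)).re = 2 := by simp
    have hb := (word_bound l 2 (by rw [h2re]; norm_num)).1
    rw [h2re] at hb
    have hlen : (l.length : ℝ) ≤ 2*B := by linarith
    have := hlen.trans (Nat.le_ceil (2*B))
    exact_mod_cast this
  exact ((List.finite_length_le Bool _).image word).subset hsub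

/-- the semigroup is normal on the half plane -/
lemma normalOn_sem : NormalOn (semigroupGen A) Hp := by
  intro s hs
  by_cases hc : ∃ h : ℂ → ℂ, {n | s n = h}.Infinite
  · obtain ⟨h, hinf⟩ := hc
    refine ⟨Nat.nth (fun n => s n = h), Nat.nth_strictMono hinf, Or.inl ⟨h, ?_⟩⟩
    have heq : (fun n => s (Nat.nth (fun n => s n = h) n)) = fun _ => h :=
      funext fun n => Nat.nth_mem_of_infinite hinf n
    rw [heq]
    intro u hu x hx
    exact ⟨Hp, self_mem_nhdsWithin,
      Filter.Eventually.of_forall fun n y _ => refl_mem_uniformity hu⟩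
  · push_neg at hc
    have hfin : ∀ B : ℝ, {n : ℕ | (s n 2).re ≤ B}.Finite := by
      intro B
      have hsub : {n : ℕ | (s n 2).re ≤ B} ⊆
          ⋃ h ∈ {h : ℂ → ℂ | InSemigroup A h ∧ (h 2).re ≤ B}, {n : ℕ | s n = h} := by
        intro n hn
        exact Set.mem_biUnion ⟨hs n, hn⟩ rfl
      exact ((finite_small B).biUnion fun h _ => hc h).subset hsub
    refine ⟨id, strictMono_id, Or.inr ?_⟩
    intro K hK _ M
    have hev : ∀ᶠ n in atTop, ¬ (s n 2).re ≤ 6*M + 2 := by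
      rw [← Nat.cofinite_eq_atTop]
      exact (hfin (6*M+2)).eventually_cofinite_notMem
    filter_upwards [hev] with n hn z hz
    push_neg at hn
    obtain ⟨l, -, hl⟩ := mem_word (hs n)
    have h2re : ((2:ℂ)).re = 2 := by simp
    have hb2 := (word_bound l 2 (by rw [h2re]; norm_num)).2
    rw [h2re] at hb2
    rw [hl] at hn
    have hlen : 2*M ≤ (l.length : ℝ) := by nlinarith
    have hz1 : (1:ℝ) ≤ z.re := le_of_lt (hK hz)
    have hbz := (word_bound l z hz1).1
    have habs : (word l z).re ≤ ‖word l z‖ := Complex.re_le_norm _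
    simp only [id_eq]
    rw [hl]
    nlinarith

end P1
end
namespace P1

/-- entire nonconstant functions are open maps -/
lemma entire_isOpenMap {h : ℂ → ℂ} (hd : Differentiable ℂ h)
    (hnc : ¬ ∃ w : ℂ, ∀ z, h z = w) : ∀ s : Set ℂ, IsOpen s → IsOpen (h '' s) := by
  have ha : AnalyticOnNhd ℂ h Set.univ := analyticOnNhd_univ_iff_differentiable.mpr hd
  rcases ha.is_constant_or_isOpen isPreconnected_univ with ⟨w, hw⟩ | hop
  · exact absurd ⟨w, fun z => hw z (Set.mem_univ z)⟩ hnc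
  · exact fun s hs => hop s (Set.subset_univ s) hs

/-- forward invariance of the Fatou set -/
lemma fatou_forward {h : ℂ → ℂ} (hd : Differentiable ℂ h)
    (hnc : ¬ ∃ w : ℂ, ∀ z, h z = w) :
    ∀ z ∈ fatouSet h, h z ∈ fatouSet h := by
  have hopen := entire_isOpenMap hd hnc
  rintro z ⟨V, hVo, hzV, hV⟩
  refine ⟨h '' V, hopen V hVo, ⟨z, hzV, rfl⟩, ?_⟩
  intro s hs
  have hs'mem : ∀ n, (s n ∘ h) ∈ iteratesOf h := by
    intro n
    obtain ⟨k, hk, hsk⟩ := hs n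
    exact ⟨k + 1, k.succ_pos, by rw [hsk, Function.iterate_succ]⟩
  obtain ⟨φ, hφ, hcase⟩ := hV (fun n => s n ∘ h) hs'mem
  refine ⟨φ, hφ, ?_⟩
  rcases hcase with ⟨g, hg⟩ | hdiv
  · left
    refine ⟨fun w => limUnder atTop fun n => s (φ n) w, ?_⟩
    intro u hu x hx
    obtain ⟨z₀, hz₀V, rfl⟩ := hx
    obtain ⟨t, ht, hev⟩ := hg u hu z₀ hz₀V
    obtain ⟨O, hOopen, hzO, hOt⟩ := mem_nhdsWithin.mp ht
    refine ⟨h '' (O ∩ V), mem_nhdsWithin_of_mem_nhds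
      ((hopen _ (hOopen.inter hVo)).mem_nhds ⟨z₀, ⟨hzO, hz₀V⟩, rfl⟩), ?_⟩
    filter_upwards [hev] with n hn y hy
    obtain ⟨w, hwOV, rfl⟩ := hy
    have hlim : Tendsto (fun n => s (φ n) (h w)) atTop (𝓝 (g w)) := by
      have := hg.tendsto_at hwOV.2
      simpa [Function.comp] using this
    rw [hlim.limUnder_eq]
    have := hn w (hOt hwOV)
    simpa [Function.comp] using this
  · right
    intro K hK hKc M
    -- build a compact K' ⊆ V with K ⊆ h '' K'
    have hcov : ∀ w : K, ∃ zc : ℂ, ∃ r : ℝ, 0 < r ∧ Metric.closedBall zc r ⊆ V ∧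
        (w : ℂ) ∈ h '' Metric.ball zc r := by
      rintro ⟨w, hw⟩
      obtain ⟨zc, hzcV, rfl⟩ := hK hw
      obtain ⟨r, hr, hball⟩ := Metric.isOpen_iff.mp hVo zc hzcV
      refine ⟨zc, r/2, by linarith, ?_, ⟨zc, Metric.mem_ball_self (by linarith), rfl⟩⟩
      exact (Metric.closedBall_subset_ball (by linarith)).trans hball
    choose zc r hr hcb hmem using hcov
    have hKsub : K ⊆ ⋃ w : K, h '' Metric.ball (zc w) (r w) := by
      intro w hw
      exact Set.mem_iUnion.mpr ⟨⟨w, hw⟩, hmem ⟨w, hw⟩⟩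
    obtain ⟨t, ht⟩ := hKc.elim_finite_subcover _
      (fun w : K => hopen _ Metric.isOpen_ball) hKsub
    set K' : Set ℂ := ⋃ w ∈ t, Metric.closedBall (zc w) (r w) with hK'
    have hK'c : IsCompact K' := t.finite_toSet.isCompact_biUnion
      fun w _ => isCompact_closedBall _ _
    have hK'V : K' ⊆ V := by
      intro y hy
      obtain ⟨w, -, hw⟩ := Set.mem_iUnion₂.mp hy
      exact hcb w hw
    have hdiv' := hdiv K' hK'V hK'c M
    filter_upwards [hdiv'] with n hn w hw
    obtain ⟨i, hit, hi⟩ := Set.mem_iUnion₂.mp (ht hw)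
    obtain ⟨y, hy, rfl⟩ := hi
    have hyK' : y ∈ K' := Set.mem_iUnion₂.mpr ⟨i, hit, Metric.ball_subset_closedBall hy⟩
    have := hn y hyK'
    simpa [Function.comp] using this

end P1
namespace P1

/-- z + c + exp(-z) is transcendental entire -/
lemma transc (c : ℂ) : TranscendentalEntire (fun z => z + c + Complex.exp (-z)) := by
  constructor
  · exact ((differentiable_id.add (differentiable_const _))).add
      (Complex.differentiable_exp.comp differentiable_neg)
  · rintro ⟨p, hp⟩
    set q : Polynomial ℂ := p - (Polynomial.X + Polynomial.C c) with hq
    have hqe : ∀ z : ℂ, Complex.exp (-z) = q.eval z := by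
      intro z
      have := hp z
      simp only [hq, Polynomial.eval_sub, Polynomial.eval_add, Polynomial.eval_X,
        Polynomial.eval_C]
      linear_combination this
    have hder : q.derivative = -q := by
      apply Polynomial.funext
      intro x
      have h1 : HasDerivAt (fun z : ℂ => Complex.exp (-z)) (-Complex.exp (-x)) x := by
        have := (Complex.hasDerivAt_exp (-x)).comp x ((hasDerivAt_id x).neg)
        simpa [Function.comp_def] using this
      have h2 : deriv (fun z : ℂ => Complex.exp (-z)) x = -Complex.exp (-x) := h1.deriv
      have h3 : (fun z : ℂ => Complex.exp (-z)) = fun z => q.eval z := funext hqe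
      rw [h3] at h2
      rw [Polynomial.deriv] at h2
      rw [h2, hqe x, Polynomial.eval_neg]
    by_cases hq0 : q = 0
    · have := hqe 0
      rw [hq0] at this
      simp at this
    · by_cases hdeg : q.natDegree = 0
      · obtain ⟨a, ha⟩ := Polynomial.natDegree_eq_zero.mp hdeg
        rw [← ha, Polynomial.derivative_C] at hder
        have hca : Polynomial.C a = 0 := neg_eq_zero.mp hder.symm
        rw [← ha, hca] at hq0
        exact hq0 rfl
      · have hlt := Polynomial.natDegree_derivative_lt hdeg
        rw [hder, Polynomial.natDegree_neg] at hlt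
        exact lt_irrefl _ hlt

lemma F1_transc : TranscendentalEntire F1 := transc 1
lemma F2_transc : TranscendentalEntire F2 := transc 2

lemma nontrivial_sem : ¬ IsTrivialSemigroup (semigroupGen A) := by
  rintro ⟨φ, hφ⟩
  have hF1 : F1 ∈ iteratesOf φ := by
    rw [← hφ]; exact InSemigroup.base (Set.mem_insert _ _)
  have hF2 : F2 ∈ iteratesOf φ := by
    rw [← hφ]; exact InSemigroup.base (Set.mem_insert_of_mem _ rfl)
  obtain ⟨a, -, ha⟩ := hF1
  obtain ⟨b, -, hb⟩ := hF2
  have hcomm : F1 ∘ F2 = F2 ∘ F1 := by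
    rw [ha, hb, ← Function.iterate_add, ← Function.iterate_add, Nat.add_comm]
  have h0 := congrFun hcomm 0
  simp only [Function.comp_apply, F1, F2] at h0
  -- F1 (F2 0) = F2 (F1 0); F2 0 = 3, F1 0 = 2
  have e0 : Complex.exp (-0 : ℂ) = 1 := by simp
  rw [e0] at h0
  norm_num at h0
  have : Complex.exp (-3 : ℂ) = Complex.exp (-2 : ℂ) := by
    have h3 : ((0:ℂ) + 2 + 1) = 3 := by norm_num
    have h2 : ((0:ℂ) + 1 + 1) = 2 := by norm_num
    first
      | exact h0
      | (rw [h3, h2] at h0; exact h0)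
      | linear_combination h0
  have hr : Real.exp (-3) = Real.exp (-2) := by
    have h3' : ((-3 : ℝ) : ℂ) = (-3 : ℂ) := by norm_num
    have h2' : ((-2 : ℝ) : ℂ) = (-2 : ℂ) := by norm_num
    have := this
    rw [← h3', ← h2', ← Complex.ofReal_exp, ← Complex.ofReal_exp] at this
    exact_mod_cast this
  have := Real.exp_eq_exp.mp hr
  norm_num at this

/-- positive iterates of a semigroup element lie in the semigroup -/
lemma iter_mem {h : ℂ → ℂ} (hh : InSemigroup A h) :
    ∀ n : ℕ, 0 < n → InSemigroup A (h^[n]) := by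
  intro n hn
  induction n with
  | zero => omega
  | succ k ih =>
      rcases Nat.eq_zero_or_pos k with rfl | hk
      · simpa using hh
      · rw [Function.iterate_succ']
        exact InSemigroup.comp hh (ih hk)

lemma iterates_sub {h : ℂ → ℂ} (hh : InSemigroup A h) :
    iteratesOf h ⊆ semigroupGen A := by
  rintro g ⟨n, hn, rfl⟩
  exact iter_mem hh n hn

lemma normalOn_mono {𝔉 𝔊 : Set (ℂ → ℂ)} {U : Set ℂ} (hsub : 𝔉 ⊆ 𝔊)
    (hN : NormalOn 𝔊 U) : NormalOn 𝔉 U :=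
  fun s hs => hN s fun n => hsub (hs n)

lemma Hp_sub_fatou {h : ℂ → ℂ} (hh : InSemigroup A h) : Hp ⊆ fatouSet h :=
  fun z hz => ⟨Hp, isOpen_Hp, hz, normalOn_mono (iterates_sub hh) normalOn_sem⟩

lemma two_mem_Hp : (2:ℂ) ∈ Hp := by norm_num [Hp]

lemma sem_maps_Hp {h : ℂ → ℂ} (hh : InSemigroup A h) {z : ℂ} (hz : z ∈ Hp) : h z ∈ Hp := by
  have := sem_bound hh z (le_of_lt hz)
  simp only [Hp, Set.mem_setOf_eq] at *
  linarith

end P1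

theorem statement_1 :
    ∃ f g : ℂ → ℂ, TranscendentalEntire f ∧ TranscendentalEntire g ∧
      ¬ IsTrivialSemigroup (semigroupGen {f, g}) ∧
      ∃ D : Set ℂ, IsPlaneDomain D ∧ SimplyConnectedSpace D ∧
        D ⊆ fatouSetOfFamily (semigroupGen {f, g}) ∧
        ∀ h : ℂ → ℂ, h ∈ semigroupGen {f, g} → LiesInPreperiodicComponent h D := by
  classical
  refine ⟨P1.F1, P1.F2, P1.F1_transc, P1.F2_transc, P1.nontrivial_sem, ?_⟩
  have hDsub : Metric.ball (2:ℂ) (1/2) ⊆ P1.Hp := by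
    intro z hz
    have h1 : |(z - 2).re| ≤ ‖z - 2‖ := Complex.abs_re_le_norm _
    have h2 : ‖z - 2‖ < 1/2 := by
      rw [Metric.mem_ball, Complex.dist_eq] at hz; exact hz
    have h3 : (z - 2).re = z.re - 2 := by simp
    have := abs_le.mp (le_of_lt (lt_of_le_of_lt h1 h2))
    simp only [P1.Hp, Set.mem_setOf_eq]
    rw [h3] at this
    linarith [this.1]
  have hne : (Metric.ball (2:ℂ) (1/2)).Nonempty := Metric.nonempty_ball.mpr (by norm_num)
  refine ⟨Metric.ball (2:ℂ) (1/2),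
    ⟨Metric.isOpen_ball, hne, (convex_ball _ _).isPreconnected⟩, ?_, ?_, ?_⟩
  · haveI := (convex_ball (2:ℂ) (1/2)).contractibleSpace hne
    infer_instance
  · exact fun z hz => ⟨P1.Hp, P1.isOpen_Hp, hDsub hz, P1.normalOn_sem⟩
  · intro h hh
    have hh' : InSemigroup P1.A h := hh
    have hdif := P1.sem_diff hh'
    have hnc := P1.sem_nonconst hh'
    have hHpF : P1.Hp ⊆ fatouSet h := P1.Hp_sub_fatou hh'
    have h2F : (2:ℂ) ∈ fatouSet h := hHpF P1.two_mem_Hp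
    have hfwd : ∀ k : ℕ, ∀ z ∈ fatouSet h, h^[k] z ∈ fatouSet h := by
      intro k
      induction k with
      | zero => simpa using fun z hz => hz
      | succ m ih =>
          intro z hz
          rw [Function.iterate_succ']
          exact P1.fatou_forward hdif hnc _ (ih z hz)
    set W := connectedComponentIn (fatouSet h) 2 with hW
    have hWsub : W ⊆ fatouSet h := connectedComponentIn_subset _ _
    have h2W : (2:ℂ) ∈ W := mem_connectedComponentIn h2F
    have hcont : Continuous h := hdif.continuous
    have hkey : ∀ k : ℕ, ∀ z ∈ W, connectedComponentIn (fatouSet h) (h^[k] z) =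
        connectedComponentIn (fatouSet h) (h^[k] 2) := by
      intro k z hz
      have himg : IsPreconnected (h^[k] '' W) :=
        (isPreconnected_connectedComponentIn).image _ (hcont.iterate k).continuousOn
      have hsub : h^[k] '' W ⊆ fatouSet h := by
        rintro y ⟨w, hwW, rfl⟩; exact hfwd k w (hWsub hwW)
      have hz' : h^[k] z ∈ connectedComponentIn (fatouSet h) (h^[k] 2) :=
        himg.subset_connectedComponentIn ⟨2, h2W, rfl⟩ hsub ⟨z, hz, rfl⟩
      exact (connectedComponentIn_eq hz').symm
    have hHpPre : IsPreconnected P1.Hp := P1.convex_Hp.isPreconnected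
    have h12 : connectedComponentIn (fatouSet h) (h^[2] 2) =
        connectedComponentIn (fatouSet h) (h^[1] 2) := by
      have hm1 : h^[1] (2:ℂ) ∈ P1.Hp := by
        simpa using P1.sem_maps_Hp hh' P1.two_mem_Hp
      have hm2 : h^[2] (2:ℂ) ∈ P1.Hp := by
        have he : h^[2] (2:ℂ) = h (h 2) := by
          rw [show (2:ℕ) = 1 + 1 from rfl, Function.iterate_add_apply]
          simp
        rw [he]
        exact P1.sem_maps_Hp hh' (P1.sem_maps_Hp hh' P1.two_mem_Hp)
      have hmem : h^[2] (2:ℂ) ∈ connectedComponentIn (fatouSet h) (h^[1] 2) :=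
        hHpPre.subset_connectedComponentIn hm1 (fun y hy => hHpF hy) hm2
      exact (connectedComponentIn_eq hmem).symm
    refine ⟨W, ⟨⟨2, h2F, hW⟩, 2, 1, one_lt_two, ?_⟩, ?_⟩
    · intro z hz
      rw [hkey 2 z hz, hkey 1 z hz]
      exact h12
    · exact fun z hz =>
        hHpPre.subset_connectedComponentIn P1.two_mem_Hp (fun y hy => hHpF hy) (hDsub hz)
end

section
/- There exist transcendental entire functions f, g and h generating a non-trivial transcendental semigroup S = ⟨f, g, h⟩, and a simply connected domain D, such that D ⊆ F(S) and, for every φ ∈ S, D lies in a periodic component of F(φ). -/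
open Complex Filter Topology

/-! ### Auxiliary development -/

section Aux

noncomputable def genA (a : ℂ) : ℂ → ℂ := fun z => a * (Complex.exp z - 1)

lemma genA_diff (a : ℂ) : Differentiable ℂ (genA a) :=
  (Complex.differentiable_exp.sub_const 1).const_mul a

lemma genA_zero (a : ℂ) : genA a 0 = 0 := by simp [genA]

lemma genA_deriv (a : ℂ) : deriv (genA a) 0 = a := by
  have h : HasDerivAt (genA a) (a * Complex.exp 0) 0 :=
    (((Complex.hasDerivAt_exp 0).sub_const 1).const_mul a)
  simpa using h.deriv

lemma genA_contract {a : ℂ} (ha : ‖a‖ ≤ 1/8) {z : ℂ} (hz : ‖z‖ ≤ 1) :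
    ‖genA a z‖ ≤ (1/4) * ‖z‖ := by
  have h1 : ‖Complex.exp z - 1‖ ≤ 2 * ‖z‖ := Complex.norm_exp_sub_one_le hz
  have h0 : (0:ℝ) ≤ ‖a‖ := norm_nonneg a
  have h2 : ‖genA a z‖ = ‖a‖ * ‖Complex.exp z - 1‖ := norm_mul _ _
  nlinarith [norm_nonneg (Complex.exp z - 1), norm_nonneg z]

lemma genA_trans {a : ℂ} (ha : a ≠ 0) : TranscendentalEntire (genA a) := by
  refine ⟨genA_diff a, ?_⟩
  rintro ⟨p, hp⟩
  set q : Polynomial ℂ := Polynomial.C a⁻¹ * p + 1 with hqdef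
  have hq : ∀ z, Complex.exp z = q.eval z := by
    intro z
    have h := hp z
    simp only [genA] at h
    simp only [hqdef, Polynomial.eval_add, Polynomial.eval_mul, Polynomial.eval_C,
      Polynomial.eval_one]
    field_simp
    linear_combination h
  have hq' : q.derivative = q := by
    apply Polynomial.funext
    intro z
    rw [← Polynomial.deriv]
    have hfun : (fun z => q.eval z) = Complex.exp := funext fun z => (hq z).symm
    rw [hfun, Complex.deriv_exp, hq z]
  have hq0 : q = 0 := by
    by_contra h
    exact absurd (congrArg Polynomial.degree hq') (Polynomial.degree_derivative_lt h).ne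
  have h0 := hq 0
  rw [hq0] at h0
  simp [Complex.exp_zero] at h0

/-! Words in the semigroup -/

def wComp (l : List (ℂ → ℂ)) : ℂ → ℂ := l.foldr (· ∘ ·) id

lemma wComp_nil : wComp [] = id := rfl
lemma wComp_cons (x : ℂ → ℂ) (l : List (ℂ → ℂ)) : wComp (x :: l) = x ∘ wComp l := rfl

lemma wComp_append (l1 l2 : List (ℂ → ℂ)) : wComp (l1 ++ l2) = wComp l1 ∘ wComp l2 := by
  induction l1 with
  | nil => simp [wComp_nil]
  | cons x l ih => simp [wComp_cons, ih, Function.comp_assoc]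

lemma inSemigroup_word {A : Set (ℂ → ℂ)} {s : ℂ → ℂ} (h : InSemigroup A s) :
    ∃ l : List (ℂ → ℂ), l ≠ [] ∧ (∀ x ∈ l, x ∈ A) ∧ s = wComp l := by
  induction h with
  | @base f hf => exact ⟨[f], by simp, by simpa, by simp [wComp_cons, wComp_nil]⟩
  | comp hf hg ihf ihg =>
    obtain ⟨l1, h1, h1A, rfl⟩ := ihf
    obtain ⟨l2, _, h2A, rfl⟩ := ihg
    refine ⟨l1 ++ l2, by simp [h1], ?_, (wComp_append l1 l2).symm⟩
    intro x hx
    rcases List.mem_append.mp hx with h | h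
    · exact h1A x h
    · exact h2A x h

lemma wComp_le {A : Set (ℂ → ℂ)}
    (hgen : ∀ f ∈ A, ∀ z : ℂ, ‖z‖ ≤ 1 → ‖f z‖ ≤ (1/4) * ‖z‖) :
    ∀ l : List (ℂ → ℂ), (∀ x ∈ l, x ∈ A) → ∀ z : ℂ, ‖z‖ ≤ 1 →
      ‖wComp l z‖ ≤ (1/4) ^ l.length * ‖z‖ := by
  intro l
  induction l with
  | nil => intro _ z hz; simpa [wComp_nil] using le_refl _
  | cons x l ih =>
    intro hm z hz
    have hx : x ∈ A := hm x (by simp)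
    have ihz := ih (fun y hy => hm y (by simp [hy])) z hz
    have hpow : ((1:ℝ)/4) ^ l.length ≤ 1 := pow_le_one₀ (by norm_num) (by norm_num)
    have hwz : ‖wComp l z‖ ≤ 1 := by
      calc ‖wComp l z‖ ≤ (1/4) ^ l.length * ‖z‖ := ihz
        _ ≤ 1 * 1 := by
            apply mul_le_mul hpow hz (norm_nonneg z) (by norm_num)
        _ = 1 := by norm_num
    have hstep := hgen x hx (wComp l z) hwz
    rw [wComp_cons]
    calc ‖x (wComp l z)‖ ≤ (1/4) * ‖wComp l z‖ := hstep
      _ ≤ (1/4) * ((1/4) ^ l.length * ‖z‖) := by nlinarith [norm_nonneg (wComp l z)]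
      _ = (1/4) ^ (x :: l).length * ‖z‖ := by
          simp [List.length_cons, pow_succ]; ring

lemma finite_shortWords (A : Set (ℂ → ℂ)) (hA : A.Finite) :
    ∀ K : ℕ, {l : List (ℂ → ℂ) | l.length < K ∧ ∀ x ∈ l, x ∈ A}.Finite := by
  intro K
  induction K with
  | zero => convert Set.finite_empty using 1; ext l; simp
  | succ K ih =>
    have hsub : {l : List (ℂ → ℂ) | l.length < K + 1 ∧ ∀ x ∈ l, x ∈ A} ⊆
        insert [] ((fun p : (ℂ → ℂ) × List (ℂ → ℂ) => p.1 :: p.2) ''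
          (A ×ˢ {l : List (ℂ → ℂ) | l.length < K ∧ ∀ x ∈ l, x ∈ A})) := by
      rintro (_ | ⟨x, l⟩) ⟨hlen, hmem⟩
      · exact Set.mem_insert _ _
      · refine Set.mem_insert_of_mem _
          ⟨(x, l), ⟨hmem x (by simp), ?_, fun y hy => hmem y (by simp [hy])⟩, rfl⟩
        simpa using Nat.lt_of_succ_lt_succ hlen
    exact Set.Finite.subset (Set.Finite.insert _ ((hA.prod ih).image _)) hsub

/-! Normality -/

lemma tluo_const {g : ℂ → ℂ} {U : Set ℂ} :
    TendstoLocallyUniformlyOn (fun _ : ℕ => g) g atTop U := by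
  intro u hu x _
  exact ⟨Set.univ, Filter.univ_mem, Filter.Eventually.of_forall fun n y _ => refl_mem_uniformity hu⟩

lemma NormalOn.anti {F G : Set (ℂ → ℂ)} {U : Set ℂ} (h : NormalOn G U) (hFG : F ⊆ G) :
    NormalOn F U := fun s hs => h s fun n => hFG (hs n)

lemma normalOn_ball {A : Set (ℂ → ℂ)} (hA : A.Finite)
    (hgen : ∀ f ∈ A, ∀ z : ℂ, ‖z‖ ≤ 1 → ‖f z‖ ≤ (1/4) * ‖z‖) :
    NormalOn (semigroupGen A) (Metric.ball 0 1) := by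
  intro s hs
  by_cases hc : ∃ φ₀, {n | s n = φ₀}.Infinite
  · obtain ⟨φ₀, hφ₀⟩ := hc
    refine ⟨Nat.nth (fun n => s n = φ₀), Nat.nth_strictMono hφ₀, Or.inl ⟨φ₀, ?_⟩⟩
    have he : (fun n => s (Nat.nth (fun n => s n = φ₀) n)) = fun _ => φ₀ :=
      funext fun n => Nat.nth_mem_of_infinite hφ₀ n
    rw [he]
    exact tluo_const
  · push_neg at hc
    refine ⟨id, strictMono_id, Or.inl ⟨fun _ => 0, ?_⟩⟩
    apply TendstoUniformlyOn.tendstoLocallyUniformlyOn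
    rw [Metric.tendstoUniformlyOn_iff]
    intro ε hε
    obtain ⟨K, hK⟩ := exists_pow_lt_of_lt_one hε (by norm_num : (1/4:ℝ) < 1)
    set W := {l : List (ℂ → ℂ) | l.length < K ∧ ∀ x ∈ l, x ∈ A} with hWdef
    have hWfin : (wComp '' W).Finite := (finite_shortWords A hA K).image _
    have hfin : {n | s n ∈ wComp '' W}.Finite := by
      have heq : {n | s n ∈ wComp '' W} = ⋃ φ₀ ∈ wComp '' W, {n | s n = φ₀} := by
        ext n; simp only [Set.mem_setOf_eq, Set.mem_iUnion, exists_prop]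
        constructor
        · rintro ⟨x, hx, hxe⟩; exact ⟨wComp x, ⟨x, hx, rfl⟩, hxe.symm⟩
        · rintro ⟨i, hi, hie⟩; exact hie ▸ hi
      rw [heq]
      exact hWfin.biUnion fun φ₀ _ => hc φ₀
    have hev : ∀ᶠ n in atTop, s n ∉ wComp '' W := by
      rw [← Nat.cofinite_eq_atTop]
      exact hfin.eventually_cofinite_notMem
    filter_upwards [hev] with n hn z hz
    obtain ⟨l, hl0, hlA, hsl⟩ := inSemigroup_word (hs n)
    have hlen : K ≤ l.length := by
      by_contra hcon
      push_neg at hcon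
      exact hn ⟨l, ⟨hcon, hlA⟩, hsl.symm⟩
    have hz1 : ‖z‖ ≤ 1 := by
      have := Metric.mem_ball.mp hz
      rw [Complex.dist_eq, sub_zero] at this
      exact this.le
    have hb := wComp_le hgen l hlA z hz1
    rw [← hsl] at hb
    have hmono : ((1:ℝ)/4) ^ l.length ≤ (1/4) ^ K :=
      pow_le_pow_of_le_one (by norm_num) (by norm_num) hlen
    show dist 0 (s n z) < ε
    rw [Complex.dist_eq, zero_sub, norm_neg]
    calc ‖s n z‖ ≤ (1/4) ^ l.length * ‖z‖ := hb
      _ ≤ (1/4) ^ K * 1 := by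
          apply mul_le_mul hmono hz1 (norm_nonneg z) (by positivity)
      _ < ε := by simpa using hK

/-! Forward invariance of the Fatou set -/

lemma fatou_fwd {φ : ℂ → ℂ} (hcont : Continuous φ)
    (hopen : ∀ s : Set ℂ, IsOpen s → IsOpen (φ '' s)) {z : ℂ} (hz : z ∈ fatouSet φ) :
    φ z ∈ fatouSet φ := by
  obtain ⟨V, hVo, hzV, hVn⟩ := hz
  obtain ⟨ρ, hρ, hball⟩ := Metric.isOpen_iff.mp hVo z hzV
  set r := ρ / 2 with hrdef
  have hrpos : 0 < r := by positivity
  have hcb : Metric.closedBall z r ⊆ V :=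
    (Metric.closedBall_subset_ball (by rw [hrdef]; linarith)).trans hball
  have hWo : IsOpen (φ '' Metric.ball z r) := hopen _ Metric.isOpen_ball
  refine ⟨φ '' Metric.ball z r, hWo, ⟨z, Metric.mem_ball_self hrpos, rfl⟩, ?_⟩
  intro s hs
  choose k hk hsk using hs
  obtain ⟨ψ, hψ, hbr⟩ := hVn (fun n => φ^[k n + 1]) (fun n => ⟨k n + 1, Nat.succ_pos _, rfl⟩)
  refine ⟨ψ, hψ, ?_⟩
  have hK' : ∀ K : Set ℂ, IsCompact K →
      IsCompact (φ ⁻¹' K ∩ Metric.closedBall z r) ∧ φ ⁻¹' K ∩ Metric.closedBall z r ⊆ V :=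
    fun K hK => ⟨(isCompact_closedBall z r).inter_left (hK.isClosed.preimage hcont),
      fun x hx => hcb hx.2⟩
  rcases hbr with ⟨g, hg⟩ | hdiv
  · left
    set inv := Function.invFunOn φ (Metric.ball z r) with hinvdef
    refine ⟨fun w => g (inv w), (tendstoLocallyUniformlyOn_iff_forall_isCompact hWo).mpr ?_⟩
    intro K hKW hK
    have hgK := (tendstoLocallyUniformlyOn_iff_forall_isCompact hVo).mp hg _
      (hK' K hK).2 (hK' K hK).1
    rw [Metric.tendstoUniformlyOn_iff] at hgK ⊢
    intro ε hε
    filter_upwards [hgK ε hε] with n hn w hw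
    obtain ⟨a, ha, hab⟩ := hKW hw
    have hinvmem : inv w ∈ Metric.ball z r := Function.invFunOn_mem ⟨a, ha, hab⟩
    have hinveq : φ (inv w) = w := Function.invFunOn_eq ⟨a, ha, hab⟩
    have hmem' : inv w ∈ φ ⁻¹' K ∩ Metric.closedBall z r :=
      ⟨by rw [Set.mem_preimage, hinveq]; exact hw, Metric.ball_subset_closedBall hinvmem⟩
    have hd := hn (inv w) hmem'
    have hiter : φ^[k (ψ n) + 1] (inv w) = s (ψ n) w := by
      rw [Function.iterate_succ_apply, hinveq, ← hsk (ψ n)]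
    rw [hiter] at hd
    exact hd
  · right
    intro K hKW hK M
    filter_upwards [hdiv _ (hK' K hK).2 (hK' K hK).1 M] with n hn w hw
    obtain ⟨a, ha, hab⟩ := hKW hw
    have hd := hn a ⟨by rw [Set.mem_preimage, hab]; exact hw, Metric.ball_subset_closedBall ha⟩
    have hiter : φ^[k (ψ n) + 1] a = s (ψ n) w := by
      rw [Function.iterate_succ_apply, hab, ← hsk (ψ n)]
    rwa [hiter] at hd

/-! Semigroup member properties -/

lemma mem_props {A : Set (ℂ → ℂ)}
    (hgen : ∀ f ∈ A, Differentiable ℂ f ∧ f 0 = 0 ∧ deriv f 0 ≠ 0 ∧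
      ∀ z : ℂ, ‖z‖ ≤ 1 → ‖f z‖ ≤ (1/4) * ‖z‖) :
    ∀ s : ℂ → ℂ, InSemigroup A s → Differentiable ℂ s ∧ s 0 = 0 ∧ deriv s 0 ≠ 0 ∧
      ∀ z : ℂ, ‖z‖ ≤ 1 → ‖s z‖ ≤ (1/4) * ‖z‖ := by
  intro s hs
  induction hs with
  | base h => exact hgen _ h
  | @comp f g hf hg ihf ihg =>
    obtain ⟨df, f0, f', fc⟩ := ihf
    obtain ⟨dg, g0, g', gc⟩ := ihg
    refine ⟨df.comp dg, by simp [Function.comp_apply, g0, f0], ?_, ?_⟩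
    · rw [deriv_comp 0 df.differentiableAt dg.differentiableAt, g0]
      exact mul_ne_zero f' g'
    · intro z hz
      have h1 := gc z hz
      have h2 : ‖g z‖ ≤ 1 := by nlinarith [norm_nonneg z]
      show ‖f (g z)‖ ≤ (1/4) * ‖z‖
      calc ‖f (g z)‖ ≤ (1/4) * ‖g z‖ := fc _ h2
        _ ≤ (1/4) * ‖z‖ := by nlinarith [norm_nonneg (g z)]

lemma iterate_mem {A : Set (ℂ → ℂ)} {φ : ℂ → ℂ} (hφ : InSemigroup A φ) :
    ∀ n : ℕ, 0 < n → InSemigroup A (φ^[n]) := by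
  intro n
  induction n with
  | zero => omega
  | succ n ih =>
    intro _
    rcases Nat.eq_zero_or_pos n with h | h
    · subst h
      rw [Function.iterate_one]
      exact hφ
    · rw [Function.iterate_succ']
      exact InSemigroup.comp hφ (ih h)

lemma iterates_subset {A : Set (ℂ → ℂ)} {φ : ℂ → ℂ} (hφ : InSemigroup A φ) :
    iteratesOf φ ⊆ semigroupGen A := by
  rintro _ ⟨n, hn, rfl⟩
  exact iterate_mem hφ n hn

lemma deriv_iterate {φ : ℂ → ℂ} (hd : Differentiable ℂ φ) (h0 : φ 0 = 0) :
    ∀ n : ℕ, deriv (φ^[n]) 0 = (deriv φ 0) ^ n := by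
  intro n
  induction n with
  | zero => simp
  | succ n ih =>
    rw [Function.iterate_succ']
    rw [deriv_comp 0 hd.differentiableAt (hd.iterate n).differentiableAt,
      Function.iterate_fixed h0 n, ih, pow_succ']

end Aux


theorem statement_2 :
    ∃ f g h : ℂ → ℂ, TranscendentalEntire f ∧ TranscendentalEntire g ∧ TranscendentalEntire h ∧
      ¬ IsTrivialSemigroup (semigroupGen {f, g, h}) ∧
      ∃ D : Set ℂ, IsPlaneDomain D ∧ SimplyConnectedSpace D ∧
        D ⊆ fatouSetOfFamily (semigroupGen {f, g, h}) ∧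
        ∀ φ : ℂ → ℂ, φ ∈ semigroupGen {f, g, h} → LiesInPeriodicComponent φ D := by
  classical
  have hI8 : (Complex.I / 8 : ℂ) ≠ 0 := div_ne_zero Complex.I_ne_zero (by norm_num)
  set A : Set (ℂ → ℂ) := {genA (1/8), genA (-(1/8)), genA (Complex.I/8)} with hAdef
  have hgen : ∀ f ∈ A, Differentiable ℂ f ∧ f 0 = 0 ∧ deriv f 0 ≠ 0 ∧
      ∀ z : ℂ, ‖z‖ ≤ 1 → ‖f z‖ ≤ (1/4) * ‖z‖ := by
    intro f hf
    have hex : ∃ a : ℂ, ‖a‖ ≤ 1/8 ∧ a ≠ 0 ∧ f = genA a := by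
      rcases hf with rfl | rfl | rfl
      · exact ⟨1/8, by simp [map_div₀], by norm_num, rfl⟩
      · exact ⟨-(1/8), by simp [map_div₀], by norm_num, rfl⟩
      · exact ⟨Complex.I/8, by simp [map_div₀, Complex.norm_I], hI8, rfl⟩
    obtain ⟨a, ha, ha0, rfl⟩ := hex
    exact ⟨genA_diff a, genA_zero a, by rw [genA_deriv]; exact ha0,
      fun z hz => genA_contract ha hz⟩
  have hAfin : A.Finite := (Set.finite_singleton _).insert _ |>.insert _
  have hnormal : NormalOn (semigroupGen A) (Metric.ball 0 1) :=
    normalOn_ball hAfin fun f hf => (hgen f hf).2.2.2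
  refine ⟨genA (1/8), genA (-(1/8)), genA (Complex.I/8),
    genA_trans (by norm_num), genA_trans (by norm_num), genA_trans hI8, ?_, Metric.ball 0 1,
    ⟨Metric.isOpen_ball, ⟨0, Metric.mem_ball_self one_pos⟩,
      (convex_ball (0:ℂ) 1).isPreconnected⟩, ?_, ?_, ?_⟩
  · rintro ⟨φ, hSeq⟩
    have hφS : InSemigroup A φ := by
      have h1 : φ ∈ iteratesOf φ := ⟨1, one_pos, (Function.iterate_one φ).symm⟩
      rw [← hSeq] at h1
      exact h1
    obtain ⟨dφ, φ0, -, -⟩ := mem_props hgen φ hφS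
    have hfmem : genA (1/8) ∈ iteratesOf φ := by
      rw [← hSeq]; exact InSemigroup.base (by simp [hAdef])
    have hgmem : genA (-(1/8)) ∈ iteratesOf φ := by
      rw [← hSeq]; exact InSemigroup.base (by simp [hAdef])
    obtain ⟨n, hn, hfn⟩ := hfmem
    obtain ⟨m, hm, hgm⟩ := hgmem
    have h1 : (deriv φ 0) ^ n = 1/8 := by
      rw [← deriv_iterate dφ φ0 n, ← hfn, genA_deriv]
    have h2 : (deriv φ 0) ^ m = -(1/8) := by
      rw [← deriv_iterate dφ φ0 m, ← hgm, genA_deriv]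
    set t := ‖deriv φ 0‖ with htdef
    have htn : t ^ n = 1/8 := by rw [htdef, ← norm_pow, h1]; simp [map_div₀]
    have htm : t ^ m = 1/8 := by
      rw [htdef, ← norm_pow, h2, norm_neg]; simp [map_div₀]
    have htne : t ≠ 0 := by
      intro h
      rw [h, zero_pow hn.ne'] at htn
      norm_num at htn
    have ht0 : 0 < t := (norm_nonneg _).lt_of_ne (Ne.symm htne)
    have ht1 : t < 1 := by
      by_contra hcon
      push_neg at hcon
      have := one_le_pow₀ hcon (n := n)
      rw [htn] at this
      norm_num at this
    have hnm : n = m := by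
      by_contra hne
      rcases Nat.lt_or_ge n m with h | h
      · have := pow_lt_pow_right_of_lt_one₀ ht0 ht1 h
        rw [htn, htm] at this; norm_num at this
      · have h' : m < n := by omega
        have := pow_lt_pow_right_of_lt_one₀ ht0 ht1 h'
        rw [htn, htm] at this; norm_num at this
    have hfg : genA (1/8) = genA (-(1/8)) := by rw [hfn, hgm, hnm]
    have he := congrFun hfg 1
    simp only [genA] at he
    have hexp : Complex.exp 1 = 1 := by linear_combination (4:ℂ) * he
    have hre : Real.exp 1 = 1 := by
      have h := Complex.ofReal_exp 1
      rw [Complex.ofReal_one] at h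
      exact_mod_cast h.trans hexp
    linarith [Real.exp_one_gt_d9, hre]
  · haveI : ContractibleSpace (Metric.ball (0:ℂ) 1) :=
      (convex_ball (0:ℂ) 1).contractibleSpace ⟨0, Metric.mem_ball_self one_pos⟩
    infer_instance
  · intro z hz
    exact ⟨Metric.ball 0 1, Metric.isOpen_ball, hz, hnormal⟩
  · intro φ hφ
    obtain ⟨dφ, φ0, dφ0, -⟩ := mem_props hgen φ hφ
    have hcont : Continuous φ := dφ.continuous
    have hopen : ∀ s : Set ℂ, IsOpen s → IsOpen (φ '' s) := by
      rcases (dφ.differentiableOn.analyticOnNhd isOpen_univ).is_constant_or_isOpen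
          isPreconnected_univ with ⟨w, hw⟩ | h
      · exfalso
        have hconst : φ = fun _ => w := funext fun z => hw z trivial
        rw [hconst] at dφ0
        simp at dφ0
      · exact fun s hs => h s (Set.subset_univ s) hs
    have hball : Metric.ball (0:ℂ) 1 ⊆ fatouSet φ := fun z hz =>
      ⟨Metric.ball 0 1, Metric.isOpen_ball, hz, hnormal.anti (iterates_subset hφ)⟩
    have h0F : (0:ℂ) ∈ fatouSet φ := hball (Metric.mem_ball_self one_pos)
    refine ⟨connectedComponentIn (fatouSet φ) 0, ⟨⟨0, h0F, rfl⟩, 1, one_pos, ?_⟩, ?_⟩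
    · rw [Function.iterate_one]
      have himg : φ '' connectedComponentIn (fatouSet φ) 0 ⊆ fatouSet φ := by
        rintro _ ⟨w, hw, rfl⟩
        exact fatou_fwd hcont hopen (connectedComponentIn_subset _ _ hw)
      have hpc : IsPreconnected (φ '' connectedComponentIn (fatouSet φ) 0) :=
        (isPreconnected_connectedComponentIn).image φ hcont.continuousOn
      have h0m : (0:ℂ) ∈ φ '' connectedComponentIn (fatouSet φ) 0 :=
        ⟨0, mem_connectedComponentIn h0F, φ0⟩
      exact hpc.subset_connectedComponentIn h0m himg
    · exact (convex_ball (0:ℂ) 1).isPreconnected.subset_connectedComponentIn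
        (Metric.mem_ball_self one_pos) hball
end
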